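/- arXiv:2604.02673 — 4 statements merged into one kernel-verified Lean document; each statement's English description precedes it below -/
import Mathlib

section
/- Owner-local normalization preserves truth: given a simplicial secrecy model M, define M^loc by replacing each N_a^S(v) with {U ∈ N_a^S(v) : St(v) ⊆ U}, where St(v) is the set of facets containing v. Then M^loc is again a simplicial secrecy model (satisfies (SN)), and for every formula φ of the language with K_a and S_a and every facet X, φ holds at X in M iff φ holds at X in M^loc. -/
/-- Formulas of the epistemic-secrecy language: atoms, ¬, ∧, K_a, S_a. -/
inductive Form (A P : Type) : Type where
  | atom : P → Form A P
  | neg : Form A P → Form A P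
  | and : Form A P → Form A P → Form A P
  | K : A → Form A P → Form A P
  | S : A → Form A P → Form A P

/-- A simplicial secrecy model over agents `A` and propositional variables `P`:
an `A`-chromatic simplicial epistemic model (vertices `V`, downward-closed family of
non-empty finite faces `F`, colouring `χ` injective on faces, every facet containing
all colours, every vertex lying in a facet, valuation `ν` on facets) enriched with
secrecy neighborhood functions `N` attached to vertices (local states).
`va a X` is the unique vertex of colour `a` in a facet `X`. -/
structure SSModel (A P : Type) where
  V : Type
  F : Set (Finset V)
  F_nonempty : F.Nonempty
  faces_nonempty : ∀ X ∈ F, X.Nonempty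
  down_closed : ∀ X ∈ F, ∀ Y : Finset V, Y.Nonempty → Y ⊆ X → Y ∈ F
  χ : V → A
  chromatic : ∀ X ∈ F, Set.InjOn χ (X : Set V)
  va : A → Finset V → V
  va_spec : ∀ X ∈ F, (∀ Y ∈ F, X ⊆ Y → X = Y) → ∀ a : A, va a X ∈ X ∧ χ (va a X) = a
  facet_all_colours : ∀ X ∈ F, (∀ Y ∈ F, X ⊆ Y → X = Y) → ∀ a : A, ∃ v ∈ X, χ v = a
  vertex_cover : ∀ v : V, ∃ X ∈ F, (∀ Y ∈ F, X ⊆ Y → X = Y) ∧ v ∈ X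
  ν : Finset V → P → Prop
  N : V → Set (Set (Finset V))

namespace SSModel

variable {A P : Type}

/-- A facet is a maximal face. -/
def IsFacet (M : SSModel A P) (X : Finset M.V) : Prop :=
  X ∈ M.F ∧ ∀ Y ∈ M.F, X ⊆ Y → X = Y

/-- The star of a vertex: the set of facets containing it. -/
def St (M : SSModel A P) (v : M.V) : Set (Finset M.V) :=
  {X | M.IsFacet X ∧ v ∈ X}

/-- Truth at a facet. `X ~_a Y` iff `va a X = va a Y`.  `S a φ` holds iff `K a φ` holds
and the truth set of `φ` is a designated secrecy neighborhood at the owner's `a`-vertex. -/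
def Sat (M : SSModel A P) : Form A P → Finset M.V → Prop
  | Form.atom p, X => M.ν X p
  | Form.neg φ, X => ¬ M.Sat φ X
  | Form.and φ ψ, X => M.Sat φ X ∧ M.Sat ψ X
  | Form.K a φ, X => ∀ Y, M.IsFacet Y → M.va a X = M.va a Y → M.Sat φ Y
  | Form.S a φ, X =>
      (∀ Y, M.IsFacet Y → M.va a X = M.va a Y → M.Sat φ Y) ∧
      {Y : Finset M.V | M.IsFacet Y ∧ M.Sat φ Y} ∈ M.N (M.va a X)

/-- Frame condition (SN), external uncertainty: every designated secrecy event at an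
`a`-coloured local state `v` leaves every other agent `b` with an indistinguishable
facet outside the event, from every facet in the star of `v`. -/
def SN (M : SSModel A P) : Prop :=
  ∀ v : M.V, ∀ U ∈ M.N v, ∀ X : Finset M.V, M.IsFacet X → v ∈ X →
    ∀ b : A, b ≠ M.χ v → ∃ Y : Finset M.V, M.IsFacet Y ∧ M.va b X = M.va b Y ∧ Y ∉ U

end SSModel

/-- Owner-local normalization: restricting each secrecy neighborhood `N_a^S(v)` to the
events containing `St(v)` yields again a simplicial secrecy model (it satisfies (SN)),
and truth of every formula at every facet is preserved. -/
theorem owner_local_normalization {A P : Type} (M : SSModel A P) (hSN : M.SN) :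
    (SSModel.SN { M with N := fun v => {U ∈ M.N v | M.St v ⊆ U} }) ∧
    (∀ (φ : Form A P) (X : Finset M.V), M.IsFacet X →
      (M.Sat φ X ↔
        SSModel.Sat { M with N := fun v => {U ∈ M.N v | M.St v ⊆ U} } φ X)) := by
  set M' : SSModel A P := { M with N := fun v => {U ∈ M.N v | M.St v ⊆ U} } with hM'
  have hva : ∀ (a : A) (X Y : Finset M.V), M.IsFacet X → M.IsFacet Y →
      M.va a X ∈ Y → M.va a X = M.va a Y := by
    intro a X Y hX hY hmem
    obtain ⟨hXm, hXχ⟩ := M.va_spec X hX.1 hX.2 a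
    obtain ⟨hYm, hYχ⟩ := M.va_spec Y hY.1 hY.2 a
    exact M.chromatic Y hY.1 hmem hYm (hXχ.trans hYχ.symm)
  refine ⟨?_, ?_⟩
  · intro v U hU X hX hv b hb
    exact hSN v U hU.1 X hX hv b hb
  · intro φ
    induction φ with
    | atom p => intro X _; exact Iff.rfl
    | neg φ ih =>
      intro X hX
      exact not_congr (ih X hX)
    | and φ ψ ihφ ihψ =>
      intro X hX
      exact and_congr (ihφ X hX) (ihψ X hX)
    | K a φ ih =>
      intro X _
      constructor
      · intro h Y hY hv; exact (ih Y hY).1 (h Y hY hv)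
      · intro h Y hY hv; exact (ih Y hY).2 (h Y hY hv)
    | S a φ ih =>
      intro X hX
      have hset : {Y : Finset M'.V | M'.IsFacet Y ∧ M'.Sat φ Y} =
          {Y : Finset M.V | M.IsFacet Y ∧ M.Sat φ Y} := by
        ext Y
        constructor
        · rintro ⟨hY, hs⟩; exact ⟨hY, (ih Y hY).2 hs⟩
        · rintro ⟨hY, hs⟩; exact ⟨hY, (ih Y hY).1 hs⟩
      show _ ↔ (_ ∧ {Y : Finset M'.V | M'.IsFacet Y ∧ M'.Sat φ Y} ∈ M'.N (M'.va a X))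
      rw [hset]
      constructor
      · rintro ⟨hK, hN⟩
        refine ⟨fun Y hY hv => (ih Y hY).1 (hK Y hY hv), hN, ?_⟩
        rintro Y ⟨hY, hvY⟩
        exact ⟨hY, hK Y hY (hva a X Y hX hY hvY)⟩
      · rintro ⟨hK, hN, _⟩
        exact ⟨fun Y hY hv => (ih Y hY).2 (hK Y hY hv), hN⟩
end

section
/- The secrecy operator is not idempotent: there exists a two-agent simplicial secrecy model M and a facet X such that S_a p holds at X but S_a S_a p fails at X. -/
namespace NotIdem

abbrev Vt := Fin 3 × Bool

def Fc (i j : Fin 3) : Finset Vt := {(i, true), (j, false)}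

lemma mem_Fc {v : Vt} {i j : Fin 3} : v ∈ Fc i j ↔ v = (i, true) ∨ v = (j, false) := by
  simp [Fc]

def Fset : Set (Finset Vt) := {X | X.Nonempty ∧ ∃ i j, X ⊆ Fc i j}

lemma Fc_mem {i j : Fin 3} : Fc i j ∈ Fset :=
  ⟨⟨(i, true), by simp [Fc]⟩, i, j, subset_rfl⟩

lemma Fc_eq_iff {i j i' j' : Fin 3} : Fc i j = Fc i' j' ↔ i = i' ∧ j = j' := by
  constructor
  · intro h
    have h1 : ((i : Fin 3), true) ∈ Fc i' j' := h ▸ (by simp [Fc])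
    have h2 : ((j : Fin 3), false) ∈ Fc i' j' := h ▸ (by simp [Fc])
    simp [Fc, Prod.ext_iff] at h1 h2
    exact ⟨h1, h2⟩
  · rintro ⟨rfl, rfl⟩; rfl

lemma Fc_max {i j : Fin 3} : ∀ Y ∈ Fset, Fc i j ⊆ Y → Fc i j = Y := by
  rintro Y ⟨-, i', j', hY⟩ hsub
  have h1 : ((i : Fin 3), true) ∈ Fc i' j' := hY (hsub (by simp [Fc]))
  have h2 : ((j : Fin 3), false) ∈ Fc i' j' := hY (hsub (by simp [Fc]))
  simp [Fc, Prod.ext_iff] at h1 h2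
  subst h1; subst h2
  exact Finset.Subset.antisymm hsub hY

lemma maximal_eq {X : Finset Vt} (hX : X ∈ Fset)
    (hmax : ∀ Y ∈ Fset, X ⊆ Y → X = Y) : ∃ i j, X = Fc i j := by
  obtain ⟨-, i, j, hsub⟩ := hX
  exact ⟨i, j, hmax (Fc i j) Fc_mem hsub⟩

noncomputable def myva (a : Bool) (X : Finset Vt) : Vt :=
  if h : ∃ v ∈ X, v.2 = a then h.choose else ((0 : Fin 3), a)

lemma myva_Fc (a : Bool) (i j : Fin 3) :
    myva a (Fc i j) = (bif a then i else j, a) := by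
  have h : ∃ v ∈ Fc i j, v.2 = a := by
    cases a
    · exact ⟨(j, false), by simp [Fc], rfl⟩
    · exact ⟨(i, true), by simp [Fc], rfl⟩
  rw [myva, dif_pos h]
  have hs := h.choose_spec
  rcases mem_Fc.1 hs.1 with hc | hc <;> rw [hc] <;> rw [hc] at hs <;> cases a <;>
    simp_all

def U0 : Set (Finset Vt) :=
  {X | X = Fc 0 0 ∨ X = Fc 0 1 ∨ X = Fc 0 2 ∨ X = Fc 1 0}

noncomputable def M : SSModel Bool Unit where
  V := Vt
  F := Fset
  F_nonempty := ⟨Fc 0 0, Fc_mem⟩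
  faces_nonempty := fun _ hX => hX.1
  down_closed := fun X hX Y hYne hYX =>
    ⟨hYne, hX.2.elim fun i h => h.elim fun j hs => ⟨i, j, hYX.trans hs⟩⟩
  χ := Prod.snd
  chromatic := by
    rintro X ⟨-, i, j, hsub⟩ v hv w hw h
    rcases mem_Fc.1 (hsub hv) with h1 | h1 <;> rcases mem_Fc.1 (hsub hw) with h2 | h2 <;>
      subst h1 <;> subst h2 <;> simp_all
  va := myva
  va_spec := by
    intro X hX hmax a
    obtain ⟨i, j, rfl⟩ := maximal_eq hX hmax
    rw [myva_Fc]
    cases a <;> simp [Fc]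
  facet_all_colours := by
    intro X hX hmax a
    obtain ⟨i, j, rfl⟩ := maximal_eq hX hmax
    cases a
    · exact ⟨(j, false), by simp [Fc], rfl⟩
    · exact ⟨(i, true), by simp [Fc], rfl⟩
  vertex_cover := by
    rintro ⟨i, c⟩
    cases c
    · exact ⟨Fc 0 i, Fc_mem, Fc_max, by simp [Fc]⟩
    · exact ⟨Fc i 0, Fc_mem, Fc_max, by simp [Fc]⟩
  ν := fun X _ => X = Fc 0 0 ∨ X = Fc 0 1 ∨ X = Fc 0 2 ∨ X = Fc 1 0
  N := fun v => if v = ((0 : Fin 3), true) then {U0} else ∅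

lemma M_va : M.va = myva := rfl

lemma isFacet_iff {X : Finset Vt} : M.IsFacet X ↔ ∃ i j, X = Fc i j := by
  constructor
  · rintro ⟨hX, hmax⟩; exact maximal_eq hX hmax
  · rintro ⟨i, j, rfl⟩; exact ⟨Fc_mem, Fc_max⟩

lemma truthset_p : {Y : Finset M.V | M.IsFacet Y ∧ M.Sat (Form.atom ()) Y} = U0 := by
  ext Y
  simp only [Set.mem_setOf_eq, SSModel.Sat, U0]
  constructor
  · rintro ⟨-, h⟩; exact h
  · intro h
    refine ⟨isFacet_iff.2 ?_, h⟩
    rcases h with rfl | rfl | rfl | rfl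
    · exact ⟨0, 0, rfl⟩
    · exact ⟨0, 1, rfl⟩
    · exact ⟨0, 2, rfl⟩
    · exact ⟨1, 0, rfl⟩

end NotIdem

/-- The secrecy operator is not idempotent: there is a two-agent simplicial secrecy
model and a facet at which `S_a p` holds but `S_a S_a p` fails. -/
theorem secrecy_not_idempotent :
    ∃ (P : Type) (M : SSModel Bool P) (p : P) (a : Bool) (X : Finset M.V),
      M.SN ∧ M.IsFacet X ∧
      M.Sat (Form.S a (Form.atom p)) X ∧
      ¬ M.Sat (Form.S a (Form.S a (Form.atom p))) X := by
  refine ⟨Unit, NotIdem.M, (), true, NotIdem.Fc 0 0, ?_, ?_, ?_, ?_⟩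
  · -- SN
    intro v U hU X hX hvX b hb
    by_cases hv : v = ((0 : Fin 3), true)
    · subst hv
      have hU0 : U = NotIdem.U0 := by
        have h := hU; simp [NotIdem.M] at h; exact h
      subst hU0
      have hb' : b = false := by
        simpa [NotIdem.M] using hb
      subst hb'
      obtain ⟨i, j, rfl⟩ := NotIdem.isFacet_iff.1 hX
      have hi : i = 0 := by
        rcases NotIdem.mem_Fc.1 hvX with h | h <;> simp_all [Prod.ext_iff]
      subst hi
      refine ⟨NotIdem.Fc 2 j, NotIdem.isFacet_iff.2 ⟨2, j, rfl⟩, ?_, ?_⟩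
      · rw [NotIdem.M_va, NotIdem.myva_Fc, NotIdem.myva_Fc]; rfl
      · intro hmem
        rcases hmem with h | h | h | h <;> rw [NotIdem.Fc_eq_iff] at h <;> simp_all
    · exact absurd hU (by simp only [NotIdem.M]; split; exact (hv ‹_›).elim; exact fun h => h)
  · exact NotIdem.isFacet_iff.2 ⟨0, 0, rfl⟩
  · constructor
    · intro Y hY hva
      obtain ⟨i, j, rfl⟩ := NotIdem.isFacet_iff.1 hY
      rw [NotIdem.M_va, NotIdem.myva_Fc, NotIdem.myva_Fc] at hva
      have hi : i = 0 := congrArg Prod.fst hva.symm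
      subst hi
      show _ = _ ∨ _
      fin_cases j <;> simp [NotIdem.Fc_eq_iff]
    · rw [NotIdem.truthset_p, NotIdem.M_va, NotIdem.myva_Fc]
      simp [NotIdem.M]; exact rfl
  · rintro ⟨-, hN⟩
    rw [NotIdem.M_va, NotIdem.myva_Fc] at hN
    have hset : {Y : Finset NotIdem.M.V | NotIdem.M.IsFacet Y ∧
        NotIdem.M.Sat (Form.S true (Form.atom ())) Y} = NotIdem.U0 := by
      have h := hN; simp [NotIdem.M] at h; exact h
    have hmem : NotIdem.Fc 1 0 ∈ NotIdem.U0 := by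
      right; right; right; rfl
    rw [← hset] at hmem
    obtain ⟨-, -, hN'⟩ := hmem
    rw [NotIdem.M_va, NotIdem.myva_Fc] at hN'
    simp [NotIdem.M, Prod.ext_iff] at hN'; exact hN'
end

section
/- Secrecy is not closed under conjunction: there exists a simplicial secrecy model, a facet X, and formulas φ, ψ such that S_aφ and S_aψ both hold at X but S_a(φ ∧ ψ) fails at X. -/
namespace SecrecyCE

/-- Truth set of `p`: facets containing `0` or `1`. -/
def Setp : Set (Finset (Fin 4)) := {Y | Y = {0, 3} ∨ Y = {1, 3}}

/-- Truth set of `r`: facets containing `0` or `2`. -/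
def Setr : Set (Finset (Fin 4)) := {Y | Y = {0, 3} ∨ Y = {2, 3}}

/-- The counterexample model. -/
abbrev M : SSModel Bool Bool where
  V := Fin 4
  F := {X | X.Nonempty ∧ ∃ j : Fin 4, j.val < 3 ∧ X ⊆ {j, 3}}
  F_nonempty := ⟨{0}, by decide⟩
  faces_nonempty := fun X hX => hX.1
  down_closed := fun X hX Y hYne hYX => ⟨hYne, hX.2.choose, hX.2.choose_spec.1,
    hYX.trans hX.2.choose_spec.2⟩
  χ := fun v => decide (v.val < 3)
  chromatic := by decide
  va := fun a X => if a then (if (0 : Fin 4) ∈ X then 0 else if (1 : Fin 4) ∈ X then 1 else 2)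
    else 3
  va_spec := by decide
  facet_all_colours := by decide
  vertex_cover := by decide
  ν := fun X q => if q then ((0 : Fin 4) ∈ X ∨ (1 : Fin 4) ∈ X)
    else ((0 : Fin 4) ∈ X ∨ (2 : Fin 4) ∈ X)
  N := fun v => if v = 0 then {Setp, Setr} else ∅

instance : DecidableEq M.V := inferInstanceAs (DecidableEq (Fin 4))
instance : Fintype M.V := inferInstanceAs (Fintype (Fin 4))
instance (n : ℕ) : OfNat M.V n := inferInstanceAs (OfNat (Fin 4) n)

instance (X : Finset M.V) (q : Bool) : Decidable (M.ν X q) :=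
  inferInstanceAs (Decidable (if q then ((0 : Fin 4) ∈ X ∨ (1 : Fin 4) ∈ X)
    else ((0 : Fin 4) ∈ X ∨ (2 : Fin 4) ∈ X)))

lemma isFacet_iff (Y : Finset (Fin 4)) :
    M.IsFacet Y ↔ (Y = {0, 3} ∨ Y = {1, 3} ∨ Y = {2, 3}) := by
  simp only [SSModel.IsFacet, M, Set.mem_setOf_eq]
  revert Y
  decide

end SecrecyCE

/-- Secrecy is not closed under conjunction: there are a simplicial secrecy model, a
facet `X`, and formulas `φ, ψ` with `S_a φ` and `S_a ψ` true at `X` but `S_a (φ ∧ ψ)`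
false at `X`. -/

theorem secrecy_not_conjunctive :
    ∃ (A P : Type) (M : SSModel A P) (a : A) (X : Finset M.V) (φ ψ : Form A P),
      M.SN ∧ M.IsFacet X ∧
      M.Sat (Form.S a φ) X ∧ M.Sat (Form.S a ψ) X ∧
      ¬ M.Sat (Form.S a (Form.and φ ψ)) X := by
  refine ⟨Bool, Bool, SecrecyCE.M, true, ({0, 3} : Finset (Fin 4)), Form.atom true,
    Form.atom false,
    ?_, ?_, ?_, ?_, ?_⟩
  · -- SN
    intro v U hU X hX hvX b hb
    fin_cases v
    · -- v = 0
      have hU' : U = SecrecyCE.Setp ∨ U = SecrecyCE.Setr := by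
        simpa [SecrecyCE.M, Set.mem_insert_iff] using hU
      have hb' : b = false := by
        cases b
        · rfl
        · exact absurd (by decide : (true : Bool) = SecrecyCE.M.χ 0) hb
      subst hb'
      rcases hU' with rfl | rfl
      · exact ⟨({2, 3} : Finset (Fin 4)), (SecrecyCE.isFacet_iff _).mpr (by decide), by
          have h3 : SecrecyCE.M.va false X = 3 := rfl
          have h3' : SecrecyCE.M.va false {2, 3} = 3 := rfl
          rw [h3, h3'], (by decide : ¬(({2, 3} : Finset (Fin 4)) = {0, 3} ∨ ({2, 3} : Finset (Fin 4)) = {1, 3}))⟩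
      · exact ⟨({1, 3} : Finset (Fin 4)), (SecrecyCE.isFacet_iff _).mpr (by decide), by
          have h3 : SecrecyCE.M.va false X = 3 := rfl
          have h3' : SecrecyCE.M.va false {1, 3} = 3 := rfl
          rw [h3, h3'], (by decide : ¬(({1, 3} : Finset (Fin 4)) = {0, 3} ∨ ({1, 3} : Finset (Fin 4)) = {2, 3}))⟩
    · exact absurd hU (by simp [SecrecyCE.M])
    · exact absurd hU (by simp [SecrecyCE.M])
    · exact absurd hU (by simp [SecrecyCE.M])
  · exact (SecrecyCE.isFacet_iff _).mpr (by decide)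
  · -- S_a p
    constructor
    · intro Y hY hva
      rw [SecrecyCE.isFacet_iff] at hY
      rcases hY with rfl | rfl | rfl
      · show SecrecyCE.M.ν {0, 3} true; decide
      · exact absurd hva (by decide)
      · exact absurd hva (by decide)
    · have hset : {Y : Finset SecrecyCE.M.V | SecrecyCE.M.IsFacet Y ∧
          SecrecyCE.M.Sat (Form.atom true) Y} = SecrecyCE.Setp := by
        ext Y
        simp only [Set.mem_setOf_eq, SecrecyCE.isFacet_iff, SecrecyCE.Setp]
        constructor
        · rintro ⟨(rfl | rfl | rfl), h⟩
          · exact Or.inl rfl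
          · exact Or.inr rfl
          · exact absurd h (by decide : ¬ SecrecyCE.M.ν {2, 3} true)
        · rintro (rfl | rfl)
          · exact ⟨Or.inl rfl, (by decide : SecrecyCE.M.ν {0, 3} true)⟩
          · exact ⟨Or.inr (Or.inl rfl), (by decide : SecrecyCE.M.ν {1, 3} true)⟩
      rw [hset]
      have hva0 : SecrecyCE.M.va true {0, 3} = 0 := by decide
      rw [hva0]
      show SecrecyCE.Setp ∈ ({SecrecyCE.Setp, SecrecyCE.Setr} : Set _)
      exact Set.mem_insert _ _
  · -- S_a r
    constructor
    · intro Y hY hva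
      rw [SecrecyCE.isFacet_iff] at hY
      rcases hY with rfl | rfl | rfl
      · show SecrecyCE.M.ν {0, 3} false; decide
      · exact absurd hva (by decide)
      · exact absurd hva (by decide)
    · have hset : {Y : Finset SecrecyCE.M.V | SecrecyCE.M.IsFacet Y ∧
          SecrecyCE.M.Sat (Form.atom false) Y} = SecrecyCE.Setr := by
        ext Y
        simp only [Set.mem_setOf_eq, SecrecyCE.isFacet_iff, SecrecyCE.Setr]
        constructor
        · rintro ⟨(rfl | rfl | rfl), h⟩
          · exact Or.inl rfl
          · exact absurd h (by decide : ¬ SecrecyCE.M.ν {1, 3} false)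
          · exact Or.inr rfl
        · rintro (rfl | rfl)
          · exact ⟨Or.inl rfl, (by decide : SecrecyCE.M.ν {0, 3} false)⟩
          · exact ⟨Or.inr (Or.inr rfl), (by decide : SecrecyCE.M.ν {2, 3} false)⟩
      rw [hset]
      have hva0 : SecrecyCE.M.va true {0, 3} = 0 := by decide
      rw [hva0]
      show SecrecyCE.Setr ∈ ({SecrecyCE.Setp, SecrecyCE.Setr} : Set _)
      exact Set.mem_insert_of_mem _ rfl
  · -- ¬ S_a (p ∧ r)
    rintro ⟨-, hmem⟩
    have hva0 : SecrecyCE.M.va true {0, 3} = 0 := by decide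
    rw [hva0] at hmem
    have hmem' : {Y : Finset SecrecyCE.M.V | SecrecyCE.M.IsFacet Y ∧
        SecrecyCE.M.Sat (Form.and (Form.atom true) (Form.atom false)) Y}
          = SecrecyCE.Setp ∨
        {Y : Finset SecrecyCE.M.V | SecrecyCE.M.IsFacet Y ∧
        SecrecyCE.M.Sat (Form.and (Form.atom true) (Form.atom false)) Y}
          = SecrecyCE.Setr := by
      simpa [SecrecyCE.M, Set.mem_insert_iff] using hmem
    rcases hmem' with h | h
    · have h13 : ({1, 3} : Finset (Fin 4)) ∈ SecrecyCE.Setp := Or.inr rfl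
      rw [← h] at h13
      exact absurd h13.2.2 (by decide : ¬ SecrecyCE.M.ν {1, 3} false)
    · have h23 : ({2, 3} : Finset (Fin 4)) ∈ SecrecyCE.Setr := Or.inr rfl
      rw [← h] at h23
      exact absurd h23.2.1 (by decide : ¬ SecrecyCE.M.ν {2, 3} true)
end

section
/- Secrecy is not monotone: there exists a simplicial secrecy model, a facet X, and formulas φ, ψ with φ → ψ valid such that S_aφ holds at X but S_aψ fails at X. -/
abbrev MyM : SSModel Unit Bool where
  V := Bool
  F := {X | X = {false} ∨ X = {true}}
  F_nonempty := ⟨{true}, Or.inr rfl⟩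
  faces_nonempty := by rintro X (rfl | rfl) <;> simp
  down_closed := by
    rintro X (rfl | rfl) Y hY hsub <;>
      [left; right] <;>
      exact (Finset.Nonempty.subset_singleton_iff hY).mp hsub
  χ := fun _ => ()
  chromatic := by
    rintro X (rfl | rfl) <;> intro x hx y hy _ <;> simp_all
  va := fun _ X => if true ∈ X then true else false
  va_spec := by
    rintro X (rfl | rfl) _ a <;> simp
  facet_all_colours := by
    rintro X (rfl | rfl) _ a <;> exact ⟨_, Finset.mem_singleton_self _, rfl⟩
  vertex_cover := by
    intro v
    refine ⟨{v}, ?_, ?_, Finset.mem_singleton_self v⟩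
    · cases v
      · left; rfl
      · right; rfl
    · rintro Y (rfl | rfl) hsub <;> cases v <;> simp_all
  ν := fun X p => p ∈ X
  N := fun _ => {{({true} : Finset Bool)}}

lemma myM_facet_iff (Y : Finset Bool) :
    MyM.IsFacet Y ↔ (Y = {false} ∨ Y = {true}) := by
  constructor
  · rintro ⟨h, _⟩; exact h
  · rintro (rfl | rfl)
    · exact ⟨Or.inl rfl, by rintro Z (rfl | rfl) hsub <;> simp_all⟩
    · exact ⟨Or.inr rfl, by rintro Z (rfl | rfl) hsub <;> simp_all⟩

/-- Secrecy is not monotone: there are a simplicial secrecy model, a facet `X`, and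
formulas `φ, ψ` such that `φ → ψ` is valid (on all simplicial secrecy models), `S_a φ`
holds at `X`, but `S_a ψ` fails at `X`. -/
theorem secrecy_not_monotone :
    ∃ (A P : Type) (M : SSModel A P) (a : A) (X : Finset M.V) (φ ψ : Form A P),
      M.SN ∧ M.IsFacet X ∧
      (∀ (M' : SSModel A P), M'.SN → ∀ Y : Finset M'.V, M'.IsFacet Y →
        M'.Sat φ Y → M'.Sat ψ Y) ∧
      M.Sat (Form.S a φ) X ∧
      ¬ M.Sat (Form.S a ψ) X := by
  refine ⟨Unit, Bool, MyM, (), {true},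
    Form.atom true,
    Form.neg (Form.and (Form.neg (Form.atom true)) (Form.neg (Form.atom false))), ?_, ?_, ?_, ?_, ?_⟩
  · -- SN vacuous: only one agent
    intro v U hU X hX hv b hb
    exact absurd rfl hb
  · exact (myM_facet_iff _).mpr (Or.inr rfl)
  · intro M' _ Y _ hY
    simp only [SSModel.Sat] at *
    intro ⟨h1, _⟩
    exact h1 hY
  · constructor
    · intro Y hY hva
      rw [myM_facet_iff] at hY
      rcases hY with rfl | rfl
      · simp [MyM, SSModel.Sat] at hva ⊢
      · simp [MyM, SSModel.Sat]
    · show {Y | MyM.IsFacet Y ∧ MyM.Sat (Form.atom true) Y} ∈ MyM.N _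
      have : {Y | MyM.IsFacet Y ∧ MyM.Sat (Form.atom true) Y} = {({true} : Finset Bool)} := by
        ext Y
        simp only [Set.mem_setOf_eq, Set.mem_singleton_iff, myM_facet_iff]
        constructor
        · rintro ⟨rfl | rfl, h⟩
          · simp [MyM, SSModel.Sat] at h
          · rfl
        · rintro rfl
          exact ⟨Or.inr rfl, by simp [MyM, SSModel.Sat]⟩
      rw [this]
      exact rfl
  · rintro ⟨-, hmem⟩
    have h1 : ({false} : Finset Bool) ∈ {Y | MyM.IsFacet Y ∧
        MyM.Sat (Form.neg (Form.and (Form.neg (Form.atom true)) (Form.neg (Form.atom false)))) Y} := by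
      refine ⟨(myM_facet_iff _).mpr (Or.inl rfl), ?_⟩
      simp [MyM, SSModel.Sat]
    have h2 : {Y | MyM.IsFacet Y ∧
        MyM.Sat (Form.neg (Form.and (Form.neg (Form.atom true)) (Form.neg (Form.atom false)))) Y}
        ∈ ({{({true} : Finset Bool)}} : Set (Set (Finset Bool))) := hmem
    rw [Set.mem_singleton_iff] at h2
    rw [h2] at h1
    simp at h1
end
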